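/- For a Markov chain started from a quasi-stationary distribution μ, for every n ≥ 1, i ∈ I and ε ∈ ℰ, one has ℙ_μ(X_{τ_ℰ - 1} = i, X_{τ_ℰ} = ε, τ_ℰ = n) = P(i,ε) μ(i) γ^{n-1}. -/
import Mathlib


open Finset Matrix

/-- Started from a q.s.d. μ, for every n ≥ 1, i ∈ I and ε ∈ ℰ,
ℙ_μ(X_{τ_ℰ-1} = i, X_{τ_ℰ} = ε, τ_ℰ = n) — i.e. the probability that the chain stays in I
up to time n-1, is at i at time n-1 and jumps to ε at time n, which equals
(μᵀ P_I^{n-1})(i) · P(i,ε) — is given by P(i,ε) μ(i) γ^{n-1}. -/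
theorem qsd_last_state_absorption_joint {I E : Type*} [Fintype I] [Fintype E]
    [DecidableEq I] [DecidableEq E] [Nonempty I] [Nonempty E]
    (P : Matrix (I ⊕ E) (I ⊕ E) ℝ)
    (PI : Matrix I I ℝ) (hPI : PI = P.submatrix Sum.inl Sum.inl)
    (hP0 : ∀ a b, 0 ≤ P a b)
    (hP1 : ∀ a, ∑ b, P a b = 1)
    (habs : ∀ (ε : E) (b : I ⊕ E), P (Sum.inr ε) b = if b = Sum.inr ε then 1 else 0)
    (hirr : ∀ i j : I, ∃ n : ℕ, 0 < (PI ^ n) i j)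
    (hsub : 0 < ∑ i : I, ∑ ε : E, P (Sum.inl i) (Sum.inr ε))
    (μ : I → ℝ) (hμ0 : ∀ i, 0 ≤ μ i) (hμ1 : ∑ i, μ i = 1)
    (γ : ℝ) (hγ : 0 < γ ∧ γ < 1)
    (hqsd : μ ᵥ* PI = γ • μ) :
    ∀ n : ℕ, 1 ≤ n → ∀ (i : I) (ε : E),
      (μ ᵥ* (PI ^ (n - 1))) i * P (Sum.inl i) (Sum.inr ε)
        = P (Sum.inl i) (Sum.inr ε) * μ i * γ ^ (n - 1) := by
  have key : ∀ k : ℕ, μ ᵥ* (PI ^ k) = γ ^ k • μ := by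
    intro k
    induction k with
    | zero => simp
    | succ k ih =>
      rw [pow_succ, ← vecMul_vecMul, ih]
      have h2 : (γ ^ k • μ) ᵥ* PI = γ ^ k • (μ ᵥ* PI) := by
        funext j
        simp [vecMul, dotProduct, Finset.mul_sum, mul_assoc]
      rw [h2, hqsd, smul_smul, pow_succ]
  intro n hn i ε
  rw [key]
  simp [Pi.smul_apply, smul_eq_mul]
  ring
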